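/- Let T > 0, n a positive integer, ε = T/n, t_k = kε, τ(t) = t_k and τ̄(t) = t_{k+1} for t ∈ [t_k, t_{k+1}). Let m be a natural number and g : [0,T] → ℝ continuous. Then Σ_{k=0}^{K−1} ∫_{t_k}^{t_{k+1}} (t_{k+1} − t)^{m+1} (∫_{t_k}^{t} g(r) dr) dt = (1/(m+2)) ∫₀^{t_K} (τ̄(t) − t)^{m+2} g(t) dt for every K ∈ {0,…,n}. -/

import Mathlib

open MeasureTheory Set

set_option maxHeartbeats 1000000

theorem stmt_8 (T : ℝ) (hT : 0 < T) (n : ℕ) (hn : 0 < n) (ε : ℝ) (hε : ε = T / n)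
    (τ τ' : ℝ → ℝ)
    (hτ : ∀ k : ℕ, k < n → ∀ t ∈ Ico ((k:ℝ)*ε) (((k:ℝ)+1)*ε), τ t = (k:ℝ)*ε)
    (hτ' : ∀ k : ℕ, k < n → ∀ t ∈ Ico ((k:ℝ)*ε) (((k:ℝ)+1)*ε), τ' t = ((k:ℝ)+1)*ε)
    (m : ℕ) (g : ℝ → ℝ) (hg : ContinuousOn g (Icc (0:ℝ) T)) :
    ∀ K : ℕ, K ≤ n →
      ∑ k ∈ Finset.range K,
          ∫ t in ((k:ℝ)*ε)..(((k:ℝ)+1)*ε),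
            (((k:ℝ)+1)*ε - t)^(m+1) * (∫ r in ((k:ℝ)*ε)..t, g r)
        = (1/((m:ℝ)+2)) * ∫ t in (0:ℝ)..((K:ℝ)*ε), (τ' t - t)^(m+2) * g t := by
  intro K hK
  have hn' : (n:ℝ) ≠ 0 := Nat.cast_ne_zero.2 hn.ne'
  have hε0 : 0 < ε := by rw [hε]; positivity
  have hTn : (n:ℝ) * ε = T := by rw [hε]; field_simp
  have hm2 : ((m:ℝ)+2) ≠ 0 := by positivity
  set G : ℝ → ℝ := fun x => g (max 0 (min T x)) with hGdef
  have hGc : Continuous G := hg.comp_continuous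
    (continuous_const.max (continuous_const.min continuous_id))
    (fun x => ⟨le_max_left _ _, max_le hT.le (min_le_left _ _)⟩)
  have hGg : ∀ x ∈ Icc (0:ℝ) T, G x = g x := fun x hx => by
    simp [hGdef, min_eq_right hx.2, max_eq_right hx.1]
  have hle : ∀ k : ℕ, ((k:ℝ)*ε) ≤ (((k:ℝ)+1)*ε) := fun k => by nlinarith [Nat.cast_nonneg (α := ℝ) k]
  have hsub : ∀ k : ℕ, k < n → Icc ((k:ℝ)*ε) (((k:ℝ)+1)*ε) ⊆ Icc 0 T := by
    intro k hk
    apply Icc_subset_Icc (by positivity)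
    calc ((k:ℝ)+1)*ε ≤ (n:ℝ)*ε := by
          have h1 : (k:ℝ)+1 ≤ (n:ℝ) := by exact_mod_cast hk
          nlinarith
      _ = T := hTn
  -- integration by parts on a generic cell, with the continuous extension G
  have cellG : ∀ a c : ℝ, a ≤ c →
      ∫ t in a..c, (c-t)^(m+1) * (∫ r in a..t, G r)
        = (1/((m:ℝ)+2)) * ∫ t in a..c, (c-t)^(m+2) * G t := by
    intro a c _
    have hu : ∀ x ∈ uIcc a c, HasDerivAt (fun t => ∫ r in a..t, G r) (G x) x := fun x _ =>
      intervalIntegral.integral_hasDerivAt_right (hGc.intervalIntegrable a x)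
        hGc.aestronglyMeasurable.stronglyMeasurableAtFilter hGc.continuousAt
    have hv : ∀ x ∈ uIcc a c,
        HasDerivAt (fun t => -(c-t)^(m+2)/((m:ℝ)+2)) ((c-x)^(m+1)) x := by
      intro x _
      have h1 : HasDerivAt (fun t : ℝ => (c - t)) (-1) x := (hasDerivAt_id x).const_sub c
      have h2 := (h1.fun_pow (m+2)).fun_neg.div_const ((m:ℝ)+2)
      refine h2.congr_deriv ?_
      rw [div_eq_iff hm2, show m + 2 - 1 = m + 1 by omega]; push_cast; ring
    have hIBP := intervalIntegral.integral_mul_deriv_eq_deriv_mul hu hv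
      (hGc.intervalIntegrable a c)
      (((continuous_const.sub continuous_id).pow (m+1)).intervalIntegrable a c)
    have hL : (∫ t in a..c, (c-t)^(m+1) * (∫ r in a..t, G r))
        = ∫ t in a..c, (∫ r in a..t, G r) * (c-t)^(m+1) :=
      intervalIntegral.integral_congr fun t _ => mul_comm _ _
    rw [hL, hIBP, intervalIntegral.integral_same, zero_mul, sub_zero, sub_self,
      zero_pow (by omega : m+2 ≠ 0), neg_zero, zero_div, mul_zero, zero_sub,
      ← intervalIntegral.integral_neg, ← intervalIntegral.integral_const_mul]
    refine intervalIntegral.integral_congr fun t _ => ?_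
    field_simp
  -- a.e. identification of the integrands on each cell
  have haek : ∀ k : ℕ, k < n → ∀ᵐ t : ℝ, t ∈ Set.uIoc ((k:ℝ)*ε) (((k:ℝ)+1)*ε) →
      (((k:ℝ)+1)*ε - t)^(m+2) * G t = (τ' t - t)^(m+2) * g t := by
    intro k hk
    have hbne : ∀ᵐ t : ℝ, t ≠ ((k:ℝ)+1)*ε := by
      rw [ae_iff]
      simp [not_not]
    filter_upwards [hbne] with t ht hmem
    rw [uIoc_of_le (hle k)] at hmem
    have htI : t ∈ Ico ((k:ℝ)*ε) (((k:ℝ)+1)*ε) := ⟨hmem.1.le, lt_of_le_of_ne hmem.2 ht⟩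
    rw [hτ' k hk t htI, hGg t (hsub k hk ⟨htI.1, htI.2.le⟩)]
  -- per-cell identity with the original data
  have key : ∀ k : ℕ, k < n →
      (∫ t in ((k:ℝ)*ε)..(((k:ℝ)+1)*ε),
          (((k:ℝ)+1)*ε - t)^(m+1) * (∫ r in ((k:ℝ)*ε)..t, g r))
        = (1/((m:ℝ)+2)) * ∫ t in ((k:ℝ)*ε)..(((k:ℝ)+1)*ε), (τ' t - t)^(m+2) * g t := by
    intro k hk
    have h1 : (∫ t in ((k:ℝ)*ε)..(((k:ℝ)+1)*ε),
          (((k:ℝ)+1)*ε - t)^(m+1) * (∫ r in ((k:ℝ)*ε)..t, g r))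
        = ∫ t in ((k:ℝ)*ε)..(((k:ℝ)+1)*ε),
          (((k:ℝ)+1)*ε - t)^(m+1) * (∫ r in ((k:ℝ)*ε)..t, G r) := by
      refine intervalIntegral.integral_congr fun t ht => ?_
      rw [uIcc_of_le (hle k)] at ht
      congr 1
      refine intervalIntegral.integral_congr fun r hr => ?_
      rw [uIcc_of_le ht.1] at hr
      exact (hGg r (hsub k hk ⟨hr.1, hr.2.trans ht.2⟩)).symm
    rw [h1, cellG _ _ (hle k), intervalIntegral.integral_congr_ae (haek k hk)]
  -- integrability on each cell
  have hint : ∀ k : ℕ, k < n →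
      IntervalIntegrable (fun t => (τ' t - t)^(m+2) * g t) volume ((k:ℝ)*ε) (((k:ℝ)+1)*ε) := by
    intro k hk
    have hcont : IntervalIntegrable (fun t => ((((k:ℕ):ℝ)+1)*ε - t)^(m+2) * G t) volume
        (((k:ℕ):ℝ)*ε) ((((k:ℕ):ℝ)+1)*ε) :=
      (((continuous_const.sub continuous_id).pow (m+2)).mul hGc).intervalIntegrable _ _
    exact hcont.congr_ae ((ae_restrict_iff' measurableSet_uIoc).2 (haek k hk))
  -- glue the cells
  have hsum := intervalIntegral.sum_integral_adjacent_intervals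
    (a := fun k : ℕ => (k:ℝ)*ε) (n := K)
    (f := fun t => (τ' t - t)^(m+2) * g t)
    (fun k hk => by push_cast; exact hint k (lt_of_lt_of_le hk hK))
  simp only [Nat.cast_add, Nat.cast_one, Nat.cast_zero, zero_mul] at hsum
  calc ∑ k ∈ Finset.range K,
        ∫ t in ((k:ℝ)*ε)..(((k:ℝ)+1)*ε),
          (((k:ℝ)+1)*ε - t)^(m+1) * (∫ r in ((k:ℝ)*ε)..t, g r)
      = ∑ k ∈ Finset.range K,
        (1/((m:ℝ)+2)) * ∫ t in ((k:ℝ)*ε)..(((k:ℝ)+1)*ε), (τ' t - t)^(m+2) * g t :=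
        Finset.sum_congr rfl fun k hk => key k (lt_of_lt_of_le (Finset.mem_range.mp hk) hK)
    _ = (1/((m:ℝ)+2)) * ∑ k ∈ Finset.range K,
        ∫ t in ((k:ℝ)*ε)..(((k:ℝ)+1)*ε), (τ' t - t)^(m+2) * g t := by
        rw [Finset.mul_sum]
    _ = (1/((m:ℝ)+2)) * ∫ t in (0:ℝ)..((K:ℝ)*ε), (τ' t - t)^(m+2) * g t := by
        rw [hsum]
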